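/- For all r > r₊ and θ ∈ (0, π), the potential Ψ₋ (sign ε = −1) satisfies: Ψ₋(r,θ) < 0 if and only if a² sin²θ < Δ (outside the ergosphere), Ψ₋(r,θ) > 0 if and only if Δ < a² sin²θ (inside the ergosphere), and Ψ₋(r,θ) = 0 if and only if Δ = a² sin²θ. -/
import Mathlib


noncomputable section

open Real

/-- Δ = r² − 2mr + a² + q² -/
def Delta (m a q r : ℝ) : ℝ := r ^ 2 - 2 * m * r + a ^ 2 + q ^ 2

/-- r₊ = m + √(m² − a² − q²) -/
def rPlus (m a q : ℝ) : ℝ := m + Real.sqrt (m ^ 2 - a ^ 2 - q ^ 2)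

/-- The potential Ψ_ε(r,θ) = (−1/sin θ − ε a/√Δ) / ((r² + a²)/√Δ + ε a sin θ). -/
def Psi (m a q ε r θ : ℝ) : ℝ :=
  (-1 / Real.sin θ - ε * a / Real.sqrt (Delta m a q r)) /
    ((r ^ 2 + a ^ 2) / Real.sqrt (Delta m a q r) + ε * a * Real.sin θ)

theorem PsiMinus_sign (m a q : ℝ) (hm : 0 < m) (ha : 0 ≤ a)
    (hmaq : a ^ 2 + q ^ 2 ≤ m ^ 2) (r θ : ℝ) (hr : rPlus m a q < r)
    (hθ0 : 0 < θ) (hθπ : θ < π) :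
    (Psi m a q (-1) r θ < 0 ↔ a ^ 2 * Real.sin θ ^ 2 < Delta m a q r) ∧
    (0 < Psi m a q (-1) r θ ↔ Delta m a q r < a ^ 2 * Real.sin θ ^ 2) ∧
    (Psi m a q (-1) r θ = 0 ↔ Delta m a q r = a ^ 2 * Real.sin θ ^ 2) := by
  have hs : 0 < Real.sin θ := Real.sin_pos_of_pos_of_lt_pi hθ0 hθπ
  have hs1 : Real.sin θ ≤ 1 := Real.sin_le_one θ
  have hk2 : Real.sqrt (m ^ 2 - a ^ 2 - q ^ 2) ^ 2 = m ^ 2 - a ^ 2 - q ^ 2 :=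
    Real.sq_sqrt (by linarith)
  have hk0 : 0 ≤ Real.sqrt (m ^ 2 - a ^ 2 - q ^ 2) := Real.sqrt_nonneg _
  have hrm : m < r := by
    unfold rPlus at hr; linarith
  have hΔ : 0 < Delta m a q r := by
    unfold rPlus at hr
    unfold Delta
    nlinarith [hk2, hk0, hr]
  set s := Real.sin θ with hsdef
  set d := Real.sqrt (Delta m a q r) with hdef
  have hd2 : d ^ 2 = Delta m a q r := Real.sq_sqrt hΔ.le
  have hd : 0 < d := Real.sqrt_pos.mpr hΔ
  have hDel : Delta m a q r = r ^ 2 - 2 * m * r + a ^ 2 + q ^ 2 := rfl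
  have hdr : d < r := by
    nlinarith [hd2, hDel, hrm, hm, hmaq, sq_nonneg a, sq_nonneg q, mul_pos hm hm]
  have has : 0 ≤ a * s := mul_nonneg ha hs.le
  have hD : 0 < (r ^ 2 + a ^ 2) / d + (-1) * a * s := by
    have h1 : 0 < r ^ 2 + a ^ 2 - a * s * d := by
      nlinarith [mul_nonneg ha hs.le, sq_nonneg (a - r), mul_le_of_le_one_right (mul_nonneg ha hd.le) hs1]
    have : (r ^ 2 + a ^ 2) / d + (-1) * a * s = (r ^ 2 + a ^ 2 - a * s * d) / d := by
      field_simp; ring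
    rw [this]
    exact div_pos h1 hd
  have hPsi : Psi m a q (-1) r θ =
      ((a * s - d) / (s * d)) / ((r ^ 2 + a ^ 2) / d + (-1) * a * s) := by
    unfold Psi
    rw [← hdef, ← hsdef]
    congr 1
    field_simp
    ring
  have hsd : 0 < s * d := mul_pos hs hd
  -- sign of a*s - d vs sign of a²s² - Δ
  have key : ∀ x y : ℝ, 0 ≤ x → 0 ≤ y → (x < y ↔ x ^ 2 < y ^ 2) := by
    intro x y hx hy
    constructor
    · intro h; nlinarith
    · intro h; nlinarith
  have hlt : a * s < d ↔ a ^ 2 * s ^ 2 < Delta m a q r := by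
    rw [key _ _ has hd.le, ← hd2, mul_pow]
  have hgt : d < a * s ↔ Delta m a q r < a ^ 2 * s ^ 2 := by
    rw [key _ _ hd.le has, ← hd2, mul_pow]
  have heq : a * s = d ↔ Delta m a q r = a ^ 2 * s ^ 2 := by
    constructor
    · intro h; rw [← hd2, ← h]; ring
    · intro h
      rcases lt_trichotomy (a * s) d with h' | h' | h'
      · exact absurd (hlt.mp h') (by linarith)
      · exact h'
      · exact absurd (hgt.mp h') (by linarith)
  refine ⟨?_, ?_, ?_⟩
  · rw [hPsi, div_neg_iff]
    constructor
    · rintro (⟨h1, h2⟩ | ⟨h1, h2⟩)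
      · exact absurd h2 (not_lt.mpr hD.le)
      · rw [div_neg_iff] at h1
        rcases h1 with ⟨_, h⟩ | ⟨h, _⟩
        · exact absurd h (not_lt.mpr hsd.le)
        · exact hlt.mp (by linarith)
    · intro h
      right
      refine ⟨div_neg_of_neg_of_pos (by linarith [hlt.mpr h]) hsd, hD⟩
  · rw [hPsi, div_pos_iff]
    constructor
    · rintro (⟨h1, h2⟩ | ⟨h1, h2⟩)
      · rw [div_pos_iff] at h1
        rcases h1 with ⟨h, _⟩ | ⟨_, h⟩
        · exact hgt.mp (by linarith)
        · exact absurd h (not_lt.mpr hsd.le)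
      · exact absurd h2 (not_lt.mpr hD.le)
    · intro h
      left
      refine ⟨div_pos (by linarith [hgt.mpr h]) hsd, hD⟩
  · rw [hPsi, div_eq_zero_iff]
    constructor
    · rintro (h | h)
      · rw [div_eq_zero_iff] at h
        rcases h with h | h
        · exact (heq.mp (by linarith)).symm ▸ rfl
        · exact absurd h hsd.ne'
      · exact absurd h hD.ne'
    · intro h
      left
      rw [div_eq_zero_iff]
      left
      linarith [heq.mpr h]
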